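/- If a lens satisfies both the StrongGetPut law (∀ s s' ∈ S, Put(s, Get(s')) = s') and the PutInjectivity law (∀ s ∈ S, ∀ v v' ∈ V, Put(s, v) = Put(s, v') implies v = v'), then it satisfies the PutPut law (∀ s ∈ S, ∀ v v' ∈ V, Put(Put(s, v), v') = Put(s, v')). -/
import Mathlib

/-- StrongGetPut and PutInjectivity imply PutPut. -/
theorem strongGetPut_putInjectivity_implies_putPut {S V : Type*} (Get : S → V) (Put : S → V → S)
    (hSGP : ∀ s s' : S, Put s (Get s') = s')
    (hPI : ∀ s : S, ∀ v v' : V, Put s v = Put s v' → v = v') :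
    ∀ s : S, ∀ v v' : V, Put (Put s v) v' = Put s v' := by
  intro s v v'
  have h : Get (Put s v') = v' := hPI s _ _ (by rw [hSGP])
  calc Put (Put s v) v' = Put (Put s v) (Get (Put s v')) := by rw [h]
    _ = Put s v' := hSGP _ _
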